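/- Let A be a simple ℤ/2-graded commutative algebra with A⁰ = ℂ·ε admitting an odd derivation T with T(ε) ≠ 0. Then the bilinear form ω : A¹ × A¹ → ℂ defined by x·y = ω(x,y)ε is a non-degenerate skew-symmetric form, and dim A¹ = 2. -/

import Mathlib

/-- Let `A` be a simple ℤ/2-graded commutative ℂ-algebra with
`A⁰ = ℂ·ε` admitting an odd derivation `T` with `T ε ≠ 0`.  Then the bilinear form
`ω : A¹ × A¹ → ℂ` defined by `x·y = ω(x,y) ε` is a non-degenerate skew-symmetric
form, and `dim A¹ = 2`. -/
theorem stmt18 {A : Type*} [AddCommGroup A] [Module ℂ A]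
    (mul : A →ₗ[ℂ] A →ₗ[ℂ] A)
    (A0 A1 : Submodule ℂ A) (hcompl : IsCompl A0 A1)
    (h00 : ∀ x ∈ A0, ∀ y ∈ A0, mul x y ∈ A0)
    (h01 : ∀ x ∈ A0, ∀ y ∈ A1, mul x y ∈ A1)
    (h10 : ∀ x ∈ A1, ∀ y ∈ A0, mul x y ∈ A1)
    (h11 : ∀ x ∈ A1, ∀ y ∈ A1, mul x y ∈ A0)
    (hcomm0 : ∀ x ∈ A0, ∀ y : A, mul x y = mul y x)
    (hcomm1 : ∀ x ∈ A1, ∀ y ∈ A1, mul x y = -mul y x)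
    (ε : A) (hε0 : ε ≠ 0) (hA0 : A0 = Submodule.span ℂ {ε})
    (hεsq : mul ε ε = ε)
    (hsimple : ∀ I : Submodule ℂ A,
      (∀ x ∈ I, ∀ y : A, mul x y ∈ I ∧ mul y x ∈ I) → I = ⊥ ∨ I = ⊤)
    (T : A →ₗ[ℂ] A)
    (hT0 : ∀ x ∈ A0, T x ∈ A1) (hT1 : ∀ x ∈ A1, T x ∈ A0)
    (hLeib0 : ∀ x ∈ A0, ∀ y : A, T (mul x y) = mul (T x) y + mul x (T y))
    (hLeib1 : ∀ x ∈ A1, ∀ y : A, T (mul x y) = mul (T x) y - mul x (T y))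
    (hTε : T ε ≠ 0) :
    (∀ x ∈ A1, ∀ y ∈ A1, ∃ c : ℂ, mul x y = c • ε) ∧
    (∀ x ∈ A1, ∀ y ∈ A1, mul x y = -mul y x) ∧
    (∀ x ∈ A1, x ≠ 0 → ∃ y ∈ A1, mul x y ≠ 0) ∧
    Module.finrank ℂ A1 = 2 := by
  classical
  have hεA0 : ε ∈ A0 := by rw [hA0]; exact Submodule.mem_span_singleton_self ε
  have hdis : ∀ z, z ∈ A0 → z ∈ A1 → z = 0 :=
    fun z h0 h1 => (Submodule.disjoint_def.mp hcompl.disjoint) z h0 h1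
  have hsc : ∀ x ∈ A0, ∃ c : ℂ, x = c • ε := by
    intro x hx
    rw [hA0, Submodule.mem_span_singleton] at hx
    obtain ⟨c, hc⟩ := hx
    exact ⟨c, hc.symm⟩
  have hcancel0 : ∀ (c : ℂ) (w : A), w ≠ 0 → c • w = 0 → c = 0 := by
    intro c w hw h
    rcases smul_eq_zero.mp h with h | h
    · exact h
    · exact absurd h hw
  have hcancel : ∀ (c d : ℂ) (w : A), w ≠ 0 → c • w = d • w → c = d := by
    intro c d w hw h
    have h2 : (c - d) • w = 0 := by rw [sub_smul, h, sub_self]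
    have := hcancel0 _ _ hw h2
    exact sub_eq_zero.mp this
  -- bilinearity helpers
  have msl : ∀ (c : ℂ) (x y : A), mul (c • x) y = c • mul x y := by
    intro c x y; rw [map_smul, LinearMap.smul_apply]
  have madl : ∀ (x y z : A), mul (x + y) z = mul x z + mul y z := by
    intro x y z; rw [map_add, LinearMap.add_apply]
  have msubl : ∀ (x y z : A), mul (x - y) z = mul x z - mul y z := by
    intro x y z; rw [map_sub, LinearMap.sub_apply]
  have mz : ∀ y : A, mul 0 y = 0 := by
    intro y; rw [map_zero, LinearMap.zero_apply]
  have huA1 : T ε ∈ A1 := hT0 ε hεA0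
  have hmulself : ∀ x ∈ A1, mul x x = 0 := by
    intro x hx
    have h := hcomm1 x hx x hx
    have h2 : (2 : ℂ) • mul x x = 0 := by
      rw [two_smul]
      nth_rewrite 2 [h]
      rw [add_neg_cancel]
    rcases smul_eq_zero.mp h2 with h3 | h3
    · norm_num at h3
    · exact h3
  -- mul ε (T ε) = (1/2) T ε
  have hεu : mul ε (T ε) = (2⁻¹ : ℂ) • T ε := by
    have h1 := hLeib0 ε hεA0 ε
    rw [hεsq, ← hcomm0 ε hεA0 (T ε)] at h1
    have h2 : (2 : ℂ) • mul ε (T ε) = T ε := by rw [two_smul]; exact h1.symm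
    calc mul ε (T ε) = (2⁻¹ : ℂ) • ((2 : ℂ) • mul ε (T ε)) := by
          rw [smul_smul]; norm_num
      _ = (2⁻¹ : ℂ) • T ε := by rw [h2]
  -- T (T ε) = 0
  have hTu : T (T ε) = 0 := by
    obtain ⟨lam, hlam⟩ := hsc (T (T ε)) (hT1 (T ε) huA1)
    have h3 := hLeib0 ε hεA0 (T ε)
    rw [hεu, map_smul, hlam, map_smul, hεsq, hmulself (T ε) huA1, zero_add,
      smul_smul] at h3
    have h4 := hcancel _ _ ε hε0 h3
    have h5 : lam = 0 := by linear_combination (-2 : ℂ) * h4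
    rw [hlam, h5, zero_smul]
  choose φ hφ using (show ∀ x, x ∈ A1 → ∃ c : ℂ, T x = c • ε from
    fun x hx => hsc (T x) (hT1 x hx))
  -- Lemma B : mul x (T ε) = (φ x * 2⁻¹) • ε for x ∈ A1
  have hBu : ∀ x (hx : x ∈ A1), mul x (T ε) = (φ x hx * 2⁻¹) • ε := by
    intro x hx
    obtain ⟨w, hw⟩ := hsc (mul x (T ε)) (h11 x hx (T ε) huA1)
    have h4 := hLeib1 x hx (T ε)
    rw [hTu, map_zero, sub_zero, hφ x hx, msl, hεu, hw, map_smul, smul_smul] at h4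
    rw [hw, hcancel _ _ (T ε) hTε h4]
  -- Lemma A : simplicity consequence
  have hA : ∀ x ∈ A1, mul ε x = 0 → (∀ y ∈ A1, mul x y = 0) → x = 0 := by
    intro x hx hεx hall
    have key : ∀ y : A, mul x y = 0 ∧ mul y x = 0 := by
      intro y
      obtain ⟨a, b, ha, hb, rfl⟩ := Submodule.codisjoint_iff_exists_add_eq.mp hcompl.codisjoint y
      obtain ⟨c, rfl⟩ := hsc a ha
      constructor
      · rw [map_add, map_smul, ← hcomm0 ε hεA0 x, hεx, smul_zero, hall b hb, add_zero]
      · rw [madl, msl, hεx, smul_zero, hcomm1 b hb x hx, hall b hb, neg_zero, add_zero]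
    rcases hsimple (Submodule.span ℂ ({x} : Set A)) (by
      intro z hz y
      obtain ⟨c, rfl⟩ := Submodule.mem_span_singleton.mp hz
      constructor
      · rw [msl, (key y).1, smul_zero]; exact Submodule.zero_mem _
      · rw [map_smul, (key y).2, smul_zero]; exact Submodule.zero_mem _) with hI | hI
    · have := hI ▸ Submodule.mem_span_singleton_self x
      simpa using this
    · exfalso
      have hsub : Submodule.span ℂ ({x} : Set A) ≤ A1 := by
        rw [Submodule.span_le, Set.singleton_subset_iff]; exact hx
      have : ε ∈ A1 := hsub (hI ▸ Submodule.mem_top)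
      exact hε0 (hdis ε hεA0 this)
  -- existence of v ∈ A1 with T v ≠ 0
  obtain ⟨v, hvA1, hTv⟩ : ∃ v ∈ A1, T v ≠ 0 := by
    by_contra hcon
    push_neg at hcon
    have hid : ∀ x ∈ A1, ∀ y : A, mul x y ∈ A1 ∧ mul y x ∈ A1 := by
      intro x hx y
      obtain ⟨a, b, ha, hb, rfl⟩ := Submodule.codisjoint_iff_exists_add_eq.mp hcompl.codisjoint y
      obtain ⟨c, rfl⟩ := hsc a ha
      have hxb : mul x b = 0 := by
        obtain ⟨w, hw⟩ := hsc (mul x b) (h11 x hx b hb)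
        have h5 := hLeib1 x hx b
        rw [hcon x hx, hcon b hb, mz, map_zero, sub_zero, hw, map_smul] at h5
        rw [hw, hcancel0 w (T ε) hTε h5, zero_smul]
      constructor
      · rw [map_add, map_smul, ← hcomm0 ε hεA0 x, hxb, add_zero]
        exact Submodule.smul_mem _ _ (h01 ε hεA0 x hx)
      · rw [madl, msl, hcomm1 b hb x hx, hxb, neg_zero, add_zero]
        exact Submodule.smul_mem _ _ (h01 ε hεA0 x hx)
    rcases hsimple A1 hid with hI | hI
    · have : T ε ∈ (⊥ : Submodule ℂ A) := hI ▸ huA1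
      exact hTε (by simpa using this)
    · exact hε0 (hdis ε hεA0 (hI ▸ Submodule.mem_top))
  have hφv : φ v hvA1 ≠ 0 := fun h => hTv (by rw [hφ v hvA1, h, zero_smul])
  -- Lemma C
  have hC : ∀ x (hx : x ∈ A1), T x = 0 → mul v x = 0 → x = 0 := by
    intro x hx hTx hvx
    have hεx : mul ε x = 0 := by
      have h6 := hLeib1 v hvA1 x
      rw [hvx, map_zero, hTx, map_zero, sub_zero, hφ v hvA1, msl] at h6
      exact (smul_eq_zero.mp h6.symm).resolve_left hφv
    refine hA x hx hεx (fun y hy => ?_)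
    obtain ⟨w, hw⟩ := hsc (mul x y) (h11 x hx y hy)
    have h7 := hLeib1 x hx y
    rw [hTx, mz, hφ y hy, map_smul, ← hcomm0 ε hεA0 x, hεx, smul_zero, sub_zero,
      hw, map_smul] at h7
    rw [hw, hcancel0 w (T ε) hTε h7, zero_smul]
  -- spanning of A1 by T ε and v
  have hspan : ∀ y, y ∈ A1 → ∃ p c : ℂ, y = c • T ε + p • v := by
    intro y hy
    obtain ⟨w, hw⟩ := hsc (mul v y) (h11 v hvA1 y hy)
    set p : ℂ := φ y hy / φ v hvA1 with hp
    set c : ℂ := 2 * w / φ v hvA1 with hc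
    refine ⟨p, c, ?_⟩
    have hy' : y - c • T ε - p • v ∈ A1 :=
      sub_mem (sub_mem hy (Submodule.smul_mem _ _ huA1)) (Submodule.smul_mem _ _ hvA1)
    have hT' : T (y - c • T ε - p • v) = 0 := by
      rw [map_sub, map_sub, map_smul, map_smul, hTu, smul_zero, sub_zero,
        hφ y hy, hφ v hvA1, smul_smul, ← sub_smul]
      rw [show φ y hy - p * φ v hvA1 = 0 by rw [hp]; field_simp; ring, zero_smul]
    have hv' : mul v (y - c • T ε - p • v) = 0 := by
      rw [map_sub, map_sub, map_smul, map_smul, hmulself v hvA1, smul_zero, sub_zero,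
        hBu v hvA1, hw, smul_smul, ← sub_smul]
      rw [show w - c * (φ v hvA1 * 2⁻¹) = 0 by rw [hc]; field_simp; ring, zero_smul]
    have h0 := hC _ hy' hT' hv'
    exact sub_eq_zero.mp (by rwa [sub_sub] at h0)
  have hli : LinearIndependent ℂ ![T ε, v] := by
    rw [LinearIndependent.pair_iff]
    intro s t hst
    have h1 : T (s • T ε + t • v) = 0 := by rw [hst, map_zero]
    rw [map_add, map_smul, map_smul, hTu, smul_zero, zero_add, hφ v hvA1, smul_smul] at h1
    have ht : t = 0 := by
      rcases mul_eq_zero.mp (hcancel0 _ _ hε0 h1) with h | h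
      · exact h
      · exact absurd h hφv
    have hs : s = 0 := by
      rw [ht, zero_smul, add_zero] at hst
      exact hcancel0 _ _ hTε hst
    exact ⟨hs, ht⟩
  have hA1eq : A1 = Submodule.span ℂ (Set.range ![T ε, v]) := by
    apply le_antisymm
    · intro y hy
      obtain ⟨p, c, rfl⟩ := hspan y hy
      exact add_mem (Submodule.smul_mem _ _ (Submodule.subset_span ⟨0, rfl⟩))
        (Submodule.smul_mem _ _ (Submodule.subset_span ⟨1, rfl⟩))
    · rw [Submodule.span_le]
      rintro z ⟨i, rfl⟩
      fin_cases i
      · exact huA1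
      · exact hvA1
  refine ⟨fun x hx y hy => hsc _ (h11 x hx y hy), hcomm1, ?_, ?_⟩
  · intro x hx hx0
    by_contra hcon
    push_neg at hcon
    have h8 := hcon (T ε) huA1
    rw [hBu x hx] at h8
    have hφx : φ x hx = 0 := by
      rcases mul_eq_zero.mp (hcancel0 _ _ hε0 h8) with h | h
      · exact h
      · norm_num at h
    have hTx : T x = 0 := by rw [hφ x hx, hφx, zero_smul]
    have hvx : mul v x = 0 := by rw [hcomm1 v hvA1 x hx, hcon v hvA1, neg_zero]
    exact hx0 (hC x hx hTx hvx)
  · rw [hA1eq, finrank_span_eq_card hli]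
    simp
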